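/- For the polynomial P(x,t) = x² − 2tx + t² + t⁴ with t ∈ ℝ, the complex roots of P(·,t) are t + it² and t − it², and hence the root locus Γ = {t ± it² : t ∈ [−η, η]} satisfies: Γ and the real axis are 2-regularly separated but not 1-regularly separated near 0, i.e., there is C > 0 with d(x, Γ) ≥ C·|x|² for real x near 0, but no C > 0 with d(x, Γ) ≥ C·|x| for all real x near 0. -/

import Mathlib

theorem stmt17 (η : ℝ) (hη : 0 < η) (hη1 : η ≤ 1)
    (Γ : Set ℂ)
    (hΓ : Γ = {z : ℂ | ∃ t : ℝ, |t| ≤ η ∧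
      (z = (t : ℂ) + Complex.I * (t : ℂ) ^ 2 ∨ z = (t : ℂ) - Complex.I * (t : ℂ) ^ 2)}) :
    (∀ t : ℝ, ∀ z : ℂ,
      z ^ 2 - 2 * (t : ℂ) * z + (t : ℂ) ^ 2 + (t : ℂ) ^ 4 = 0 ↔
        (z = (t : ℂ) + Complex.I * (t : ℂ) ^ 2 ∨ z = (t : ℂ) - Complex.I * (t : ℂ) ^ 2)) ∧
    (∃ C : ℝ, 0 < C ∧ ∀ x : ℝ, |x| ≤ η → C * x ^ 2 ≤ Metric.infDist (x : ℂ) Γ) ∧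
    ¬ (∃ C : ℝ, 0 < C ∧ ∀ x : ℝ, |x| ≤ η → C * |x| ≤ Metric.infDist (x : ℂ) Γ) := by
  have hΓne : Γ.Nonempty := by
    refine ⟨0, ?_⟩
    rw [hΓ]
    exact ⟨0, by simp [le_of_lt hη]⟩
  refine ⟨?_, ?_, ?_⟩
  · intro t z
    have h : z ^ 2 - 2 * (t : ℂ) * z + (t : ℂ) ^ 2 + (t : ℂ) ^ 4 =
        (z - ((t : ℂ) + Complex.I * (t : ℂ) ^ 2)) * (z - ((t : ℂ) - Complex.I * (t : ℂ) ^ 2)) := by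
      linear_combination (t : ℂ) ^ 4 * Complex.I_sq
    rw [h, mul_eq_zero, sub_eq_zero, sub_eq_zero]
  · refine ⟨1/4, by norm_num, fun x hx => ?_⟩
    by_contra hlt
    push_neg at hlt
    obtain ⟨z, hz, hdz⟩ := (Metric.infDist_lt_iff hΓne).mp hlt
    refine absurd hdz (not_lt.mpr ?_)
    rw [hΓ] at hz
    obtain ⟨t, _, hzt⟩ := hz
    -- dist x z ≥ max |x - t| t²
    have him : |((x : ℂ) - z).im| = t ^ 2 := by
      rcases hzt with h | h <;> rw [h] <;>
        simp [← Complex.ofReal_pow, abs_of_nonneg (sq_nonneg t)]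
    have hre : |((x : ℂ) - z).re| = |x - t| := by
      rcases hzt with h | h <;> rw [h] <;> simp [← Complex.ofReal_pow]
    have hd : dist (x : ℂ) z = ‖(x : ℂ) - z‖ := Complex.dist_eq _ _
    have h1 : t ^ 2 ≤ dist (x : ℂ) z := by
      rw [hd, ← him]; exact Complex.abs_im_le_norm _
    have h2 : |x - t| ≤ dist (x : ℂ) z := by
      rw [hd, ← hre]; exact Complex.abs_re_le_norm _
    rcases le_or_gt (|x| / 2) |x - t| with hc | hc
    · have hx1 : |x| ≤ 1 := hx.trans hη1
      have : x ^ 2 ≤ |x| := by nlinarith [sq_abs x, abs_nonneg x]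
      nlinarith
    · have ht : |x| / 2 ≤ |t| := by
        have := abs_sub_abs_le_abs_sub x t; linarith
      have : (|x| / 2) ^ 2 ≤ t ^ 2 := by
        rw [← sq_abs t]
        exact pow_le_pow_left₀ (by positivity) ht 2
      nlinarith [sq_abs x]
  · rintro ⟨C, hC, h⟩
    set x := min η (C / 2) with hxdef
    have hx0 : 0 < x := lt_min hη (by linarith)
    have hxη : |x| ≤ η := by rw [abs_of_pos hx0]; exact min_le_left _ _
    have hmem : ((x : ℂ) + Complex.I * (x : ℂ) ^ 2) ∈ Γ := by
      rw [hΓ]; exact ⟨x, hxη, Or.inl rfl⟩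
    have hdist : dist (x : ℂ) ((x : ℂ) + Complex.I * (x : ℂ) ^ 2) = x ^ 2 := by
      rw [Complex.dist_eq]
      have : (x : ℂ) - ((x : ℂ) + Complex.I * (x : ℂ) ^ 2) = -(Complex.I * (x : ℂ) ^ 2) := by ring
      rw [this, norm_neg, norm_mul, Complex.norm_I, one_mul, ← Complex.ofReal_pow,
        Complex.norm_real, Real.norm_eq_abs, abs_of_nonneg (sq_nonneg x)]
    have hle : Metric.infDist (x : ℂ) Γ ≤ x ^ 2 := hdist ▸ Metric.infDist_le_dist_of_mem hmem
    have := h x hxη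
    rw [abs_of_pos hx0] at this
    have hx2 : C * x ≤ x ^ 2 := this.trans hle
    have : C ≤ x := by nlinarith
    have : x ≤ C / 2 := min_le_right _ _
    linarith
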